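/- arXiv:2601.10442 — 2 statements merged into one kernel-verified Lean document; each statement's English description precedes it below -/
import Mathlib

section
/- For every real β ≠ 0, the SoftplusSquared function x ↦ (1/(2·β⁴))·(log(1 + exp(β²·x)))² is convex on ℝ and monotone nondecreasing on ℝ. -/
open Real Set

lemma softplus_convex (c : ℝ) :
    ConvexOn ℝ Set.univ (fun x : ℝ => Real.log (1 + Real.exp (c * x))) := by
  have hpos : ∀ x : ℝ, (0:ℝ) < 1 + Real.exp (c * x) := fun x => by positivity
  refine convexOn_of_hasDerivWithinAt2_nonneg convex_univ
    (f' := fun x => Real.exp (c * x) * c / (1 + Real.exp (c * x)))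
    (f'' := fun x => (Real.exp (c * x) * c * c * (1 + Real.exp (c * x)) -
      Real.exp (c * x) * c * (Real.exp (c * x) * c)) / (1 + Real.exp (c * x)) ^ 2)
    ?_ ?_ ?_ ?_
  · exact ((continuous_const.add (Real.continuous_exp.comp
      (continuous_const.mul continuous_id))).log fun x => (hpos x).ne').continuousOn
  · intro x _
    have h1 : HasDerivAt (fun x : ℝ => c * x) c x := by
      simpa using (hasDerivAt_id x).const_mul c
    have h2 : HasDerivAt (fun x : ℝ => Real.exp (c * x)) (Real.exp (c * x) * c) x := h1.exp
    have h3 : HasDerivAt (fun x : ℝ => 1 + Real.exp (c * x)) (Real.exp (c * x) * c) x :=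
      h2.const_add 1
    exact (h3.log (hpos x).ne').hasDerivWithinAt
  · intro x _
    have h1 : HasDerivAt (fun x : ℝ => c * x) c x := by
      simpa using (hasDerivAt_id x).const_mul c
    have h2 : HasDerivAt (fun x : ℝ => Real.exp (c * x)) (Real.exp (c * x) * c) x := h1.exp
    have hu : HasDerivAt (fun x : ℝ => Real.exp (c * x) * c) (Real.exp (c * x) * c * c) x :=
      h2.mul_const c
    have hv : HasDerivAt (fun x : ℝ => 1 + Real.exp (c * x)) (Real.exp (c * x) * c) x :=
      h2.const_add 1
    exact (hu.div hv (hpos x).ne').hasDerivWithinAt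
  · intro x _
    have he : (0:ℝ) < Real.exp (c * x) := Real.exp_pos _
    apply div_nonneg _ (by positivity)
    nlinarith [sq_nonneg c, mul_pos he he]

/-- For every β ≠ 0, the SoftplusSquared function
x ↦ (1/(2β⁴))·(log(1 + exp(β²·x)))² is convex and monotone nondecreasing on ℝ. -/
theorem softplusSquared_convex_mono (β : ℝ) (hβ : β ≠ 0) :
    ConvexOn ℝ Set.univ
      (fun x : ℝ => (1 / (2 * β ^ 4)) * (Real.log (1 + Real.exp (β ^ 2 * x))) ^ 2) ∧
    Monotone
      (fun x : ℝ => (1 / (2 * β ^ 4)) * (Real.log (1 + Real.exp (β ^ 2 * x))) ^ 2) := by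
  have hc : (0:ℝ) ≤ 1 / (2 * β ^ 4) := by positivity
  have hlog : ∀ x : ℝ, (0:ℝ) ≤ Real.log (1 + Real.exp (β ^ 2 * x)) := fun x =>
    Real.log_nonneg (by nlinarith [Real.exp_pos (β ^ 2 * x)])
  constructor
  · have h2 := (softplus_convex (β ^ 2)).pow (fun x _ => hlog x) 2
    have h3 := h2.smul hc
    convert h3 using 2 with x
    all_goals rfl
  · intro a b hab
    simp only
    apply mul_le_mul_of_nonneg_left _ hc
    apply pow_le_pow_left₀ (hlog a)
    apply Real.log_le_log (by positivity)
    have := Real.exp_le_exp.mpr (mul_le_mul_of_nonneg_left hab (sq_nonneg β))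
    linarith
end

section
/- For every real β ≠ 0, the SoftplusSquared function x ↦ (1/(2·β⁴))·(log(1 + exp(β²·x)))² is twice differentiable on ℝ with strictly positive second derivative at every point; in particular it is strictly convex on ℝ. -/
/-- For every β ≠ 0, SoftplusSquared is twice differentiable on ℝ with strictly
positive second derivative at every point; in particular it is strictly convex. -/
theorem softplusSquared_second_deriv_pos (β : ℝ) (hβ : β ≠ 0) :
    (∀ x : ℝ, DifferentiableAt ℝ
        (fun x : ℝ => (1 / (2 * β ^ 4)) * (Real.log (1 + Real.exp (β ^ 2 * x))) ^ 2) x) ∧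
    (∀ x : ℝ, DifferentiableAt ℝ
        (deriv (fun x : ℝ =>
          (1 / (2 * β ^ 4)) * (Real.log (1 + Real.exp (β ^ 2 * x))) ^ 2)) x) ∧
    (∀ x : ℝ, 0 < deriv (deriv (fun x : ℝ =>
        (1 / (2 * β ^ 4)) * (Real.log (1 + Real.exp (β ^ 2 * x))) ^ 2)) x) ∧
    StrictConvexOn ℝ Set.univ
      (fun x : ℝ => (1 / (2 * β ^ 4)) * (Real.log (1 + Real.exp (β ^ 2 * x))) ^ 2) := by
  have hc : (0:ℝ) < β ^ 2 := by positivity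
  have he : ∀ x : ℝ, HasDerivAt (fun x => Real.exp (β ^ 2 * x))
      (β ^ 2 * Real.exp (β ^ 2 * x)) x := by
    intro x
    simpa [mul_comm] using ((hasDerivAt_id x).const_mul (β ^ 2)).exp
  have hne : ∀ x : ℝ, (1:ℝ) + Real.exp (β ^ 2 * x) ≠ 0 := fun x => by positivity
  have hg : ∀ x : ℝ, HasDerivAt (fun x => Real.log (1 + Real.exp (β ^ 2 * x)))
      (β ^ 2 * Real.exp (β ^ 2 * x) / (1 + Real.exp (β ^ 2 * x))) x := by
    intro x
    exact ((he x).const_add 1).log (hne x)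
  have hf : ∀ x : ℝ, HasDerivAt
      (fun x : ℝ => (1 / (2 * β ^ 4)) * (Real.log (1 + Real.exp (β ^ 2 * x))) ^ 2)
      ((1 / (2 * β ^ 4)) * (2 * Real.log (1 + Real.exp (β ^ 2 * x)) *
        (β ^ 2 * Real.exp (β ^ 2 * x) / (1 + Real.exp (β ^ 2 * x))))) x := by
    intro x
    have := ((hg x).pow 2).const_mul (1 / (2 * β ^ 4))
    convert this using 1
    any_goals rfl
    push_cast
    ring
  have hderiv : deriv (fun x : ℝ =>
      (1 / (2 * β ^ 4)) * (Real.log (1 + Real.exp (β ^ 2 * x))) ^ 2)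
      = fun x : ℝ => (1 / (2 * β ^ 4)) * (2 * Real.log (1 + Real.exp (β ^ 2 * x)) *
        (β ^ 2 * Real.exp (β ^ 2 * x) / (1 + Real.exp (β ^ 2 * x)))) :=
    funext fun x => (hf x).deriv
  -- derivative of the quotient
  have hq : ∀ x : ℝ, HasDerivAt
      (fun x => β ^ 2 * Real.exp (β ^ 2 * x) / (1 + Real.exp (β ^ 2 * x)))
      (β ^ 4 * Real.exp (β ^ 2 * x) / (1 + Real.exp (β ^ 2 * x)) ^ 2) x := by
    intro x
    have := (((he x).const_mul (β ^ 2)).div ((he x).const_add 1) (hne x))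
    convert this using 1
    any_goals rfl
    field_simp
    ring
  have hF : ∀ x : ℝ, HasDerivAt
      (fun x : ℝ => (1 / (2 * β ^ 4)) * (2 * Real.log (1 + Real.exp (β ^ 2 * x)) *
        (β ^ 2 * Real.exp (β ^ 2 * x) / (1 + Real.exp (β ^ 2 * x)))))
      ((1 / (2 * β ^ 4)) * (2 * ((β ^ 2 * Real.exp (β ^ 2 * x) / (1 + Real.exp (β ^ 2 * x)))
          * (β ^ 2 * Real.exp (β ^ 2 * x) / (1 + Real.exp (β ^ 2 * x)))
        + Real.log (1 + Real.exp (β ^ 2 * x)) *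
          (β ^ 4 * Real.exp (β ^ 2 * x) / (1 + Real.exp (β ^ 2 * x)) ^ 2)))) x := by
    intro x
    have := (((hg x).mul (hq x)).const_mul 2).const_mul (1 / (2 * β ^ 4))
    convert this using 1
    any_goals rfl
    funext y; simp only [Pi.mul_apply]; ring
  have hderiv2 : ∀ x : ℝ, deriv (deriv (fun x : ℝ =>
      (1 / (2 * β ^ 4)) * (Real.log (1 + Real.exp (β ^ 2 * x))) ^ 2)) x
      = (1 / (2 * β ^ 4)) * (2 * ((β ^ 2 * Real.exp (β ^ 2 * x) / (1 + Real.exp (β ^ 2 * x)))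
          * (β ^ 2 * Real.exp (β ^ 2 * x) / (1 + Real.exp (β ^ 2 * x)))
        + Real.log (1 + Real.exp (β ^ 2 * x)) *
          (β ^ 4 * Real.exp (β ^ 2 * x) / (1 + Real.exp (β ^ 2 * x)) ^ 2))) := by
    intro x
    rw [hderiv]
    exact (hF x).deriv
  have hpos2 : ∀ x : ℝ, 0 < deriv (deriv (fun x : ℝ =>
      (1 / (2 * β ^ 4)) * (Real.log (1 + Real.exp (β ^ 2 * x))) ^ 2)) x := by
    intro x
    rw [hderiv2 x]
    have hlog : 0 < Real.log (1 + Real.exp (β ^ 2 * x)) :=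
      Real.log_pos (by have := Real.exp_pos (β ^ 2 * x); linarith)
    positivity
  refine ⟨fun x => (hf x).differentiableAt, fun x => ?_, hpos2, ?_⟩
  · rw [hderiv]; exact (hF x).differentiableAt
  · apply strictConvexOn_of_deriv2_pos convex_univ
    · exact fun x _ => ((hf x).differentiableAt.continuousAt).continuousWithinAt
    · intro x _
      simpa [Function.iterate_succ, Function.comp] using hpos2 x
end
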